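/- Let U : ℝ^{D-1} → ℝ be smooth, positive, and a function of |x|² only, say U = u(|x|²), and let σ ≠ 0. Suppose the umbilical condition U'/U = 2/(1/σ² - |a|² + |x|²) holds on the sphere {x : |x - a|² = 1/σ²} with a ≠ 0. Then on the region (|a| - 1/|σ|)² ≤ |x|² ≤ (|a| + 1/|σ|)², U is proportional to (|x|² + k)² with k = 1/σ² - |a|². -/

import Mathlib

open Set Filter RealInnerProductSpace

private lemma ode_const {u : ℝ → ℝ} {k p q : ℝ} (hpq : p ≤ q)
    (hud : ∀ s ∈ Icc p q, HasDerivAt u (2 * u s / (s + k)) s)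
    (hk : ∀ s ∈ Icc p q, 0 < s + k) :
    ∀ s ∈ Icc p q, u s = (u p / (p + k) ^ 2) * (s + k) ^ 2 := by
  set g : ℝ → ℝ := fun s => u s / (s + k) ^ 2 with hg
  have hgd : ∀ s ∈ Icc p q, HasDerivAt g 0 s := by
    intro s hs
    have h1 := hud s hs
    have h2 : s + k ≠ 0 := (hk s hs).ne'
    have h3 : HasDerivAt (fun s : ℝ => (s + k) ^ 2) (2 * (s + k)) s := by
      have := ((hasDerivAt_id s).add_const k).fun_pow 2
      simpa using this
    have h4 := h1.fun_div h3 (pow_ne_zero 2 h2)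
    refine h4.congr_deriv ?_
    field_simp
    ring
  have hconst := constant_of_has_deriv_right_zero
    (f := g) (a := p) (b := q)
    (fun s hs => (hgd s hs).continuousAt.continuousWithinAt)
    (fun s hs => ((hgd s (Ico_subset_Icc_self hs)).hasDerivWithinAt))
  intro s hs
  have h := hconst s hs
  have h2 : s + k ≠ 0 := (hk s hs).ne'
  have h3 : p + k ≠ 0 := (hk p ⟨le_refl p, hpq⟩).ne'
  simp only [g] at h
  field_simp at h ⊢
  linarith [h]

private lemma sphere_surj {n : ℕ} (hn : 2 ≤ n) (a : EuclideanSpace ℝ (Fin n)) (ha : a ≠ 0)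
    {r : ℝ} (hr : 0 < r) {s : ℝ}
    (h1 : (‖a‖ - r) ^ 2 ≤ s) (h2 : s ≤ (‖a‖ + r) ^ 2) :
    ∃ x : EuclideanSpace ℝ (Fin n), ‖x - a‖ ^ 2 = r ^ 2 ∧ ‖x‖ ^ 2 = s := by
  set A := ‖a‖ with hA
  have hA0 : 0 < A := norm_pos_iff.mpr ha
  have hA2 : (0:ℝ) < A ^ 2 := by positivity
  -- find a unit vector orthogonal to a
  obtain ⟨v, hv_mem, hv_ne⟩ : ∃ v ∈ (ℝ ∙ a)ᗮ, v ≠ 0 := by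
    have hne : (ℝ ∙ a)ᗮ ≠ ⊥ := by
      rw [Ne, Submodule.orthogonal_eq_bot_iff]
      intro h
      have h1' : Module.finrank ℝ (ℝ ∙ a) = 1 := finrank_span_singleton ha
      rw [h, finrank_top] at h1'
      have h2' : Module.finrank ℝ (EuclideanSpace ℝ (Fin n)) = n :=
        finrank_euclideanSpace_fin
      omega
    exact (Submodule.ne_bot_iff _).mp hne
  set e : EuclideanSpace ℝ (Fin n) := ‖v‖⁻¹ • v with he
  have he1 : ‖e‖ = 1 := norm_smul_inv_norm hv_ne
  have hae : ⟪a, e⟫ = 0 := by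
    have hav : ⟪a, v⟫ = 0 := hv_mem a (Submodule.mem_span_singleton_self a)
    rw [he, real_inner_smul_right, hav, mul_zero]
  set α : ℝ := (s + A ^ 2 - r ^ 2) / (2 * A ^ 2) with hα
  have hnn : 0 ≤ r ^ 2 - (α - 1) ^ 2 * A ^ 2 := by
    have hsq : (α - 1) ^ 2 * A ^ 2 = (s - A ^ 2 - r ^ 2) ^ 2 / (4 * A ^ 2) := by
      rw [hα]
      field_simp
      ring
    rw [hsq, sub_nonneg, div_le_iff₀ (by positivity)]
    nlinarith [sq_nonneg (s - A^2 - r^2), mul_pos hA0 hr]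
  set β : ℝ := Real.sqrt (r ^ 2 - (α - 1) ^ 2 * A ^ 2) with hβ
  have hβ2 : β ^ 2 = r ^ 2 - (α - 1) ^ 2 * A ^ 2 := Real.sq_sqrt hnn
  refine ⟨α • a + β • e, ?_, ?_⟩
  · have hx : α • a + β • e - a = (α - 1) • a + β • e := by
      rw [sub_smul, one_smul]; abel
    rw [hx, norm_add_sq_real]
    rw [real_inner_smul_left, real_inner_smul_right, hae]
    rw [norm_smul, norm_smul, he1]
    simp only [Real.norm_eq_abs]
    rw [mul_pow, mul_pow, sq_abs, sq_abs, ← hA]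
    simp only [mul_zero, mul_one]
    rw [hβ2]; ring
  · rw [norm_add_sq_real]
    rw [real_inner_smul_left, real_inner_smul_right, hae]
    rw [norm_smul, norm_smul, he1]
    simp only [Real.norm_eq_abs]
    rw [mul_pow, mul_pow, sq_abs, sq_abs, ← hA]
    simp only [mul_zero, mul_one]
    rw [hβ2]
    rw [hα]
    field_simp
    ring

theorem stmt_17 (n : ℕ) (hn : 2 ≤ n) (u : ℝ → ℝ) (σ : ℝ) (hσ : σ ≠ 0)
    (a : EuclideanSpace ℝ (Fin n)) (ha : a ≠ 0)
    (hu : ContDiff ℝ 2 u) (hupos : ∀ s : ℝ, 0 < u s)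
    (humb : ∀ x : EuclideanSpace ℝ (Fin n), ‖x - a‖ ^ 2 = 1 / σ ^ 2 →
      deriv u (‖x‖ ^ 2) / u (‖x‖ ^ 2)
        = 2 / (1 / σ ^ 2 - ‖a‖ ^ 2 + ‖x‖ ^ 2)) :
    ∃ c : ℝ, 0 < c ∧ ∀ s : ℝ,
      (‖a‖ - 1 / |σ|) ^ 2 ≤ s → s ≤ (‖a‖ + 1 / |σ|) ^ 2 →
      u s = c * (s + (1 / σ ^ 2 - ‖a‖ ^ 2)) ^ 2 := by
  set A := ‖a‖ with hA
  have hA0 : 0 < A := norm_pos_iff.mpr ha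
  set r : ℝ := 1 / |σ| with hr
  have hr0 : 0 < r := by positivity
  have hr2 : r ^ 2 = 1 / σ ^ 2 := by
    rw [hr, div_pow, one_pow, sq_abs]
  set k : ℝ := 1 / σ ^ 2 - A ^ 2 with hk
  set lo : ℝ := (A - r) ^ 2 with hlo
  set hi : ℝ := (A + r) ^ 2 with hhi
  have hlohi : lo ≤ hi := by nlinarith
  have hdiff : Differentiable ℝ u := hu.differentiable (by norm_num)
  -- the ODE holds on [lo, hi]
  have hode : ∀ s ∈ Icc lo hi, HasDerivAt u (2 * u s / (s + k)) s := by
    intro s hs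
    obtain ⟨x, hx1, hx2⟩ := sphere_surj hn a ha hr0 hs.1 hs.2
    have := humb x (by rw [hx1, hr2])
    rw [hx2] at this
    have hus : u s ≠ 0 := (hupos s).ne'
    have hder : deriv u s = 2 * u s / (s + k) := by
      by_cases h0 : k + s = 0
      · rw [h0, div_zero] at this
        have : deriv u s = 0 := (div_eq_zero_iff.mp this).resolve_right hus
        rw [this, show s + k = 0 by linarith, div_zero]
      · have h' := (div_eq_iff hus).mp this
        rw [h', add_comm s k]
        ring
    rw [← hder]
    exact (hdiff s).hasDerivAt
  have hhik : 0 < hi + k := by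
    have : hi + k = 2 * r * (r + A) := by rw [hhi, hk, ← hr2]; ring
    rw [this]; positivity
  by_cases hcase : A < r
  · -- s + k > 0 throughout
    have hkpos : ∀ s ∈ Icc lo hi, 0 < s + k := by
      intro s hs
      have : lo + k = 2 * r * (r - A) := by rw [hlo, hk, ← hr2]; ring
      have h0 : 0 < lo + k := by
        rw [this]; nlinarith [mul_pos hr0 (sub_pos.mpr hcase)]
      linarith [hs.1]
    refine ⟨u lo / (lo + k) ^ 2, div_pos (hupos lo) (pow_pos (hkpos lo ⟨le_refl lo, hlohi⟩) 2), ?_⟩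
    intro s hs1 hs2
    have := ode_const hlohi hode hkpos s ⟨hs1, hs2⟩
    rw [this]
  · -- contradiction case: r ≤ A
    exfalso
    push_neg at hcase
    set s0 : ℝ := A ^ 2 - r ^ 2 with hs0
    have hs0k : s0 + k = 0 := by rw [hs0, hk, ← hr2]; ring
    have hs0lo : lo ≤ s0 := by rw [hlo, hs0]; nlinarith
    have hs0hi : s0 < hi := by rw [hs0, hhi]; nlinarith
    -- for t ∈ (s0, hi], u t = c0 * (t + k)^2
    set c0 : ℝ := u hi / (hi + k) ^ 2 with hc0
    have key : ∀ t ∈ Ioc s0 hi, u t = c0 * (t + k) ^ 2 := by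
      intro t ht
      have htk : ∀ s ∈ Icc t hi, 0 < s + k := by
        intro s hs
        have : 0 < t + k := by linarith [ht.1, hs0k]
        linarith [hs.1]
      have hode' : ∀ s ∈ Icc t hi, HasDerivAt u (2 * u s / (s + k)) s := by
        intro s hs
        exact hode s ⟨le_trans hs0lo (le_trans ht.1.le hs.1), hs.2⟩
      have h1 := ode_const ht.2 hode' htk t ⟨le_refl t, ht.2⟩
      have h2 := ode_const ht.2 hode' htk hi ⟨ht.2, le_refl hi⟩
      -- h1 : u t = (u t / (t+k)^2) * (t+k)^2  (trivial); h2 relates u hi to u t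
      have htk0 : t + k ≠ 0 := (htk t ⟨le_refl t, ht.2⟩).ne'
      have hhk0 : hi + k ≠ 0 := hhik.ne'
      rw [hc0]
      field_simp
      field_simp at h2
      linarith [h2]
    -- take the limit t → s0⁺
    have hmem : Ioc s0 hi ∈ nhdsWithin s0 (Ioi s0) := Ioc_mem_nhdsGT_of_mem ⟨le_refl s0, hs0hi⟩
    have hlim1 : Tendsto u (nhdsWithin s0 (Ioi s0)) (nhds (u s0)) :=
      (hdiff.continuous.continuousAt).continuousWithinAt
    have hlim2 : Tendsto (fun t => c0 * (t + k) ^ 2) (nhdsWithin s0 (Ioi s0))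
        (nhds (c0 * (s0 + k) ^ 2)) := by
      apply Tendsto.mono_left _ nhdsWithin_le_nhds
      exact (continuous_const.mul ((continuous_id.add continuous_const).pow 2)).continuousAt
    have heq : u =ᶠ[nhdsWithin s0 (Ioi s0)] fun t => c0 * (t + k) ^ 2 := by
      filter_upwards [hmem] with t ht using key t ht
    have : u s0 = c0 * (s0 + k) ^ 2 :=
      tendsto_nhds_unique hlim1 (hlim2.congr' heq.symm)
    rw [hs0k] at this
    simp at this
    exact absurd this (hupos s0).ne'
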